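/- Improvement-loss bound for replacing the interpolated stationary distribution by the current one: Let π_{K+1} and π_K be policies of a finite MDP with π_K(s,a) > 0 for all s, a, suppose max_{s∈S} D_KL(π_{K+1}(s,·) ‖ π_K(s,·)) ≤ 2C for some C ≥ 0, let ζ ∈ [0,1], and define π̃(s,a) = ζ·π_{K+1}(s,a) + (1−ζ)·π_K(s,a). Then |∑_{s∈S} (d^{π̃}(s) − d^{π_K}(s)) · A^{π̃}_{π_K}(s)| ≤ 4γζ²C/(1−γ)³. -/

import Mathlib

open Finset

/-- A finite Markov decision process with bounded rewards and discount `γ ∈ (0,1)`. -/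
structure FiniteMDP (S A : Type) [Fintype S] [Fintype A] : Type where
  P : S → A → S → ℝ
  r : S → A → ℝ
  γ : ℝ
  s0 : S
  P_nonneg : ∀ s a s', 0 ≤ P s a s'
  P_sum_one : ∀ s a, ∑ s', P s a s' = 1
  r_bound : ∀ s a, |r s a| ≤ 1
  γ_pos : 0 < γ
  γ_lt_one : γ < 1

variable {S A : Type} [Fintype S] [Fintype A] [DecidableEq S]

/-- `π` is a (stochastic) policy. -/
def IsPolicy (π : S → A → ℝ) : Prop :=
  (∀ s a, 0 ≤ π s a) ∧ ∀ s, ∑ a, π s a = 1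

/-- `Q` satisfies the Bellman equation of policy `π`. -/
def IsQ (M : FiniteMDP S A) (π Q : S → A → ℝ) : Prop :=
  ∀ s a, Q s a = M.r s a + M.γ * ∑ s', M.P s a s' * ∑ a', π s' a' * Q s' a'

/-- `d` is the discounted state (occupancy) distribution of policy `π`. -/
def IsD (M : FiniteMDP S A) (π : S → A → ℝ) (d : S → ℝ) : Prop :=
  ∀ s', d s' = (1 - M.γ) * (if s' = M.s0 then (1 : ℝ) else 0)
      + M.γ * ∑ s, d s * ∑ a, π s a * M.P s a s'

/-- The normalized return `J^π = ∑_s d^π(s) ∑_a π(s,a) r(s,a)`. -/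
def Jret (M : FiniteMDP S A) (π : S → A → ℝ) (d : S → ℝ) : ℝ :=
  ∑ s, d s * ∑ a, π s a * M.r s a

/-- The policy advantage function `A^{π'}_π(s) = ∑_a (π'(s,a) − π(s,a)) Q_π(s,a)`. -/
def polAdv (π' π Q : S → A → ℝ) (s : S) : ℝ :=
  ∑ a, (π' s a - π s a) * Q s a

/-- The expected policy advantage `A^{π'}_{π,d}`. -/
def expPolAdv (π' π Q : S → A → ℝ) (d : S → ℝ) : ℝ :=
  ∑ s, d s * polAdv π' π Q s

/-- `δ(π',π) = max_s ∑_a |π'(s,a) − π(s,a)|`. -/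
noncomputable def polDist (π' π : S → A → ℝ) : ℝ :=
  ⨆ s : S, ∑ a, |π' s a - π s a|

/-- `ΔA^{π'}_π = max_{s,s'} |A^{π'}_π(s) − A^{π'}_π(s')|`. -/
noncomputable def advRange (π' π Q : S → A → ℝ) : ℝ :=
  ⨆ p : S × S, |polAdv π' π Q p.1 - polAdv π' π Q p.2|

/-- Kullback–Leibler divergence between probability vectors on a finite set. -/
noncomputable def KLdiv {B : Type} [Fintype B] (p q : B → ℝ) : ℝ :=
  ∑ a ∈ Finset.univ.filter (fun a => 0 < p a), p a * Real.log (p a / q a)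


section Aux


noncomputable def Ffun (x : ℝ) : ℝ := 2*(x+2)*(x*Real.log x - x + 1) - 3*(x-1)^2
noncomputable def Hfun (x : ℝ) : ℝ := 2*(x*Real.log x - x + 1) + 2*(x+2)*Real.log x - 6*(x-1)

lemma hasDerivAt_F {x : ℝ} (hx : 0 < x) : HasDerivAt Ffun (Hfun x) x := by
  have h1 : HasDerivAt (fun x : ℝ => x*Real.log x) (Real.log x + 1) x :=
    Real.hasDerivAt_mul_log hx.ne'
  have h2 : HasDerivAt (fun x : ℝ => x*Real.log x - x + 1) (Real.log x) x := by
    have := (h1.sub (hasDerivAt_id x)).add_const 1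
    simpa using this
  have h3 : HasDerivAt (fun x : ℝ => 2*(x+2)) 2 x := by
    simpa using ((hasDerivAt_id x).add_const 2).const_mul 2
  have h4 := h3.mul h2
  have h5 : HasDerivAt (fun x : ℝ => 3*(x-1)^2) (3*(2*(x-1))) x := by
    have := (((hasDerivAt_id x).sub_const 1).pow 2).const_mul 3
    simpa using this
  have := h4.sub h5
  exact this.congr_deriv (by simp only [Hfun]; ring)

lemma hasDerivAt_H {x : ℝ} (hx : 0 < x) : HasDerivAt Hfun (4*Real.log x + 4/x - 4) x := by
  have h1 : HasDerivAt (fun x : ℝ => x*Real.log x) (Real.log x + 1) x :=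
    Real.hasDerivAt_mul_log hx.ne'
  have h2 : HasDerivAt (fun x : ℝ => 2*(x*Real.log x - x + 1)) (2*Real.log x) x := by
    have := (((h1.sub (hasDerivAt_id x)).add_const 1)).const_mul 2
    exact this.congr_deriv (by ring)
  have h3 : HasDerivAt (fun x : ℝ => 2*(x+2)) 2 x := by
    simpa using ((hasDerivAt_id x).add_const 2).const_mul 2
  have hlog : HasDerivAt Real.log (1/x) x := by
    simpa [one_div] using Real.hasDerivAt_log hx.ne'
  have h4 := h3.mul hlog
  have h5 : HasDerivAt (fun x : ℝ => 6*(x-1)) 6 x := by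
    simpa using ((hasDerivAt_id x).sub_const 1).const_mul 6
  have := (h2.add h4).sub h5
  exact this.congr_deriv (by field_simp; ring)

lemma H_deriv_nonneg {x : ℝ} (hx : 0 < x) : 0 ≤ 4*Real.log x + 4/x - 4 := by
  have := Real.log_le_sub_one_of_pos (show (0:ℝ) < 1/x by positivity)
  rw [Real.log_div one_ne_zero hx.ne'] at this
  simp at this
  rw [div_eq_mul_inv]
  linarith

lemma H_one : Hfun 1 = 0 := by simp [Hfun]

lemma contOn {f f' : ℝ → ℝ} (h : ∀ x : ℝ, 0 < x → HasDerivAt f (f' x) x) {s : Set ℝ}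
    (hs : ∀ x ∈ s, (0:ℝ) < x) : ContinuousOn f s :=
  fun x hx => ((h x (hs x hx)).continuousAt).continuousWithinAt

lemma H_sign {x : ℝ} (hx : 0 < x) : 0 ≤ (x - 1) * Hfun x := by
  rcases lt_trichotomy x 1 with h | h | h
  · -- H x ≥ 0? no: on (0,1), H' ≥ 0 means H increasing, H 1 = 0, so H x ≤ 0; (x-1) ≤ 0
    obtain ⟨c, hc, hceq⟩ := exists_hasDerivAt_eq_slope Hfun (fun y => 4*Real.log y + 4/y - 4) h
      (contOn (fun y hy => hasDerivAt_H hy) (fun y hy => lt_of_lt_of_le hx hy.1))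
      (fun y hy => hasDerivAt_H (lt_trans hx hy.1))
    have h0 : 0 ≤ (Hfun 1 - Hfun x) / (1 - x) := hceq ▸ H_deriv_nonneg (lt_trans hx hc.1)
    rw [H_one] at h0
    have := div_nonneg_iff.mp h0
    rcases this with ⟨h1, _⟩ | ⟨h1, h2⟩
    · nlinarith
    · nlinarith
  · simp [h, H_one]
  · obtain ⟨c, hc, hceq⟩ := exists_hasDerivAt_eq_slope Hfun (fun y => 4*Real.log y + 4/y - 4) h
      (contOn (fun y hy => hasDerivAt_H hy) (fun y hy => lt_of_lt_of_le one_pos hy.1))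
      (fun y hy => hasDerivAt_H (lt_trans one_pos hy.1))
    have h0 : 0 ≤ (Hfun x - Hfun 1) / (x - 1) := hceq ▸ H_deriv_nonneg (lt_trans one_pos hc.1)
    rw [H_one] at h0
    have := div_nonneg_iff.mp h0
    rcases this with ⟨h1, _⟩ | ⟨h1, h2⟩
    · nlinarith
    · nlinarith

lemma F_nonneg {x : ℝ} (hx : 0 < x) : 0 ≤ Ffun x := by
  have hF1 : Ffun 1 = 0 := by simp [Ffun]
  rcases lt_trichotomy x 1 with h | h | h
  · obtain ⟨c, hc, hceq⟩ := exists_hasDerivAt_eq_slope Ffun Hfun h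
      (contOn (fun y hy => hasDerivAt_F hy) (fun y hy => lt_of_lt_of_le hx hy.1))
      (fun y hy => hasDerivAt_F (lt_trans hx hy.1))
    have hcpos : 0 < c := lt_trans hx hc.1
    have hsign := H_sign hcpos
    have hc1 : c - 1 < 0 := by linarith [hc.2]
    have : Hfun c ≤ 0 := by nlinarith
    rw [hceq, hF1] at this
    have hx1 : 0 < 1 - x := by linarith
    rcases div_nonpos_iff.mp this with ⟨h1, h2⟩ | ⟨h1, h2⟩ <;> linarith
  · simp [h, hF1]
  · obtain ⟨c, hc, hceq⟩ := exists_hasDerivAt_eq_slope Ffun Hfun h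
      (contOn (fun y hy => hasDerivAt_F hy) (fun y hy => lt_of_lt_of_le one_pos hy.1))
      (fun y hy => hasDerivAt_F (lt_trans one_pos hy.1))
    have hcpos : 0 < c := lt_trans one_pos hc.1
    have hsign := H_sign hcpos
    have hc1 : 0 < c - 1 := by linarith [hc.1]
    have : 0 ≤ Hfun c := by nlinarith
    rw [hceq, hF1] at this
    have hx1 : 0 < x - 1 := by linarith
    rcases div_nonneg_iff.mp this with ⟨h1, h2⟩ | ⟨h1, h2⟩ <;> linarith

lemma key_ineq {x : ℝ} (hx : 0 < x) : 3*(x-1)^2/(2*(x+2)) ≤ x*Real.log x - x + 1 := by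
  have := F_nonneg hx
  rw [div_le_iff₀ (by linarith : (0:ℝ) < 2*(x+2))]
  simp only [Ffun] at this
  nlinarith

lemma KL_eq_sum {B : Type} [Fintype B] (p q : B → ℝ) (hp : ∀ a, 0 ≤ p a) :
    KLdiv p q = ∑ a, p a * Real.log (p a / q a) := by
  rw [KLdiv]
  refine Finset.sum_subset (Finset.filter_subset _ _) (fun a _ ha => ?_)
  have hpa : p a = 0 := by
    rcases (hp a).eq_or_lt with h | h
    · exact h.symm
    · exact absurd (Finset.mem_filter.mpr ⟨Finset.mem_univ a, h⟩) ha
  simp [hpa]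

lemma pointwise_bound {p q : ℝ} (hp : 0 ≤ p) (hq : 0 < q) :
    3*(p-q)^2/(2*(p+2*q)) ≤ p * Real.log (p/q) - p + q := by
  rcases hp.eq_or_lt with h | h
  · rw [← h]
    rw [div_le_iff₀ (by positivity)]
    nlinarith
  · have hx := key_ineq (show 0 < p/q by positivity)
    have hlog : (p/q) * Real.log (p/q) - (p/q) + 1 = (p * Real.log (p/q) - p + q)/q := by
      field_simp
    rw [hlog] at hx
    rw [div_le_div_iff₀ (by positivity) hq] at hx
    rw [div_le_iff₀ (by positivity)]
    have h2 := mul_le_mul_of_nonneg_left hx hq.le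
    have e1 : q*(3*(p/q-1)^2*q) = 3*(p-q)^2 := by field_simp
    have e2 : q*((p * Real.log (p/q) - p + q)*(2*(p/q+2)))
        = (p * Real.log (p/q) - p + q)*(2*(p+2*q)) := by field_simp
    linarith

lemma pinsker {B : Type} [Fintype B] {p q : B → ℝ} (hp0 : ∀ a, 0 ≤ p a) (hp1 : ∑ a, p a = 1)
    (hq0 : ∀ a, 0 < q a) (hq1 : ∑ a, q a = 1) :
    (∑ a, |p a - q a|) ^ 2 ≤ 2 * KLdiv p q := by
  have hKL : KLdiv p q = ∑ a, (p a * Real.log (p a / q a) - p a + q a) := by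
    rw [KL_eq_sum p q hp0, Finset.sum_add_distrib, Finset.sum_sub_distrib, hp1, hq1]
    ring
  have hcs := Finset.sq_sum_div_le_sum_sq_div Finset.univ (fun a => |p a - q a|)
      (g := fun a => (2/3) * (p a + 2 * q a))
      (fun a _ => by have := hp0 a; have := hq0 a; positivity)
  have hgsum : ∑ a, (2/3 : ℝ) * (p a + 2 * q a) = 2 := by
    rw [← Finset.mul_sum, Finset.sum_add_distrib, ← Finset.mul_sum, hp1, hq1]; norm_num
  rw [hgsum] at hcs
  have hbound : ∑ a, |p a - q a| ^ 2 / ((2/3 : ℝ) * (p a + 2 * q a)) ≤ KLdiv p q := by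
    rw [hKL]
    apply Finset.sum_le_sum
    intro a _
    have h := pointwise_bound (hp0 a) (hq0 a)
    have he : |p a - q a| ^ 2 / ((2/3 : ℝ) * (p a + 2 * q a))
        = 3*(p a - q a)^2/(2*(p a + 2*q a)) := by
      have h1 : p a + 2 * q a ≠ 0 := by have := hp0 a; have := hq0 a; positivity
      rw [sq_abs]; field_simp
    rw [he]; exact h
  calc (∑ a, |p a - q a|) ^ 2 = ((∑ a, |p a - q a|) ^ 2 / 2) * 2 := by ring
    _ ≤ KLdiv p q * 2 := mul_le_mul_of_nonneg_right (le_trans hcs hbound) (by norm_num)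
    _ = 2 * KLdiv p q := by ring

/-- Bound on Q values. -/
lemma Q_bound [Nonempty S] [Nonempty A] (M : FiniteMDP S A) (π Q : S → A → ℝ)
    (hπ : IsPolicy π) (hQ : IsQ M π Q) : ∀ s a, |Q s a| ≤ 1 / (1 - M.γ) := by
  have hγ1 : 0 < 1 - M.γ := by linarith [M.γ_lt_one]
  obtain ⟨p0, -, hmax⟩ := Finset.exists_max_image (Finset.univ : Finset (S × A))
    (fun p => |Q p.1 p.2|) Finset.univ_nonempty
  set m := |Q p0.1 p0.2| with hm
  have hm0 : 0 ≤ m := abs_nonneg _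
  have hmb : ∀ s a, |Q s a| ≤ m := fun s a => hmax (s, a) (Finset.mem_univ _)
  have hinner : ∀ s', |∑ a', π s' a' * Q s' a'| ≤ m := by
    intro s'
    calc |∑ a', π s' a' * Q s' a'| ≤ ∑ a', |π s' a' * Q s' a'| := Finset.abs_sum_le_sum_abs _ _
      _ ≤ ∑ a', π s' a' * m := by
          apply Finset.sum_le_sum
          intro a' _
          rw [abs_mul, abs_of_nonneg (hπ.1 s' a')]
          exact mul_le_mul_of_nonneg_left (hmb s' a') (hπ.1 s' a')
      _ = m := by rw [← Finset.sum_mul, hπ.2 s', one_mul]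
  have houter : |∑ s', M.P p0.1 p0.2 s' * ∑ a', π s' a' * Q s' a'| ≤ m := by
    calc |∑ s', M.P p0.1 p0.2 s' * ∑ a', π s' a' * Q s' a'|
        ≤ ∑ s', |M.P p0.1 p0.2 s' * ∑ a', π s' a' * Q s' a'| := Finset.abs_sum_le_sum_abs _ _
      _ ≤ ∑ s', M.P p0.1 p0.2 s' * m := by
          apply Finset.sum_le_sum
          intro s' _
          rw [abs_mul, abs_of_nonneg (M.P_nonneg _ _ _)]
          exact mul_le_mul_of_nonneg_left (hinner s') (M.P_nonneg _ _ _)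
      _ = m := by rw [← Finset.sum_mul, M.P_sum_one, one_mul]
  have hle : m ≤ 1 + M.γ * m := by
    calc m = |M.r p0.1 p0.2 + M.γ * ∑ s', M.P p0.1 p0.2 s' * ∑ a', π s' a' * Q s' a'| := by
          rw [hm, hQ p0.1 p0.2]
      _ ≤ |M.r p0.1 p0.2| + |M.γ * ∑ s', M.P p0.1 p0.2 s' * ∑ a', π s' a' * Q s' a'| :=
          abs_add_le _ _
      _ ≤ 1 + M.γ * m := by
          rw [abs_mul, abs_of_pos M.γ_pos]
          exact add_le_add (M.r_bound _ _) (mul_le_mul_of_nonneg_left houter M.γ_pos.le)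
  have hmfin : m ≤ 1 / (1 - M.γ) := by
    rw [le_div_iff₀ hγ1]; nlinarith
  exact fun s a => (hmb s a).trans hmfin


end Aux

/-- **Improvement-loss bound for replacing the interpolated stationary
distribution by the current one**:
`|∑_s (d^{π̃}(s) − d^{π_K}(s))·A^{π̃}_{π_K}(s)| ≤ 4γζ²C/(1−γ)³`. -/
theorem improvement_loss_bound
    {S A : Type} [Fintype S] [Fintype A] [DecidableEq S] [Nonempty S] [Nonempty A]
    (M : FiniteMDP S A) (πK1 πK Q : S → A → ℝ) (C ζ : ℝ) (πt : S → A → ℝ) (dt d : S → ℝ)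
    (hπK1 : IsPolicy πK1) (hπK : IsPolicy πK) (hπKpos : ∀ s a, 0 < πK s a)
    (hQ : IsQ M πK Q)
    (hC : 0 ≤ C)
    (hKL : (⨆ s : S, KLdiv (πK1 s) (πK s)) ≤ 2 * C)
    (hζ0 : 0 ≤ ζ) (hζ1 : ζ ≤ 1)
    (hmix : ∀ s a, πt s a = ζ * πK1 s a + (1 - ζ) * πK s a)
    (hdt : IsD M πt dt) (hd : IsD M πK d) :
    |∑ s, (dt s - d s) * polAdv πt πK Q s| ≤
      4 * M.γ * ζ ^ 2 * C / (1 - M.γ) ^ 3 := by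
  have hγ0 := M.γ_pos
  have hγ1 : 0 < 1 - M.γ := by linarith [M.γ_lt_one]
  set ℓ : ℝ := 2 * ζ * Real.sqrt C with hℓ
  have hℓ0 : 0 ≤ ℓ := by positivity
  have hℓsq : ℓ ^ 2 = 4 * ζ ^ 2 * C := by
    rw [hℓ, mul_pow, mul_pow, Real.sq_sqrt hC]; ring
  -- πt is a policy
  have hπt : IsPolicy πt := by
    constructor
    · intro s a; rw [hmix s a]
      have := hπK1.1 s a; have := (hπKpos s a).le; nlinarith
    · intro s
      simp only [hmix]
      rw [Finset.sum_add_distrib, ← Finset.mul_sum, ← Finset.mul_sum, hπK1.2 s, hπK.2 s]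
      ring
  -- L1 distance bound via Pinsker
  have hLt : ∀ s, ∑ a, |πt s a - πK s a| ≤ ℓ := by
    intro s
    have hKLs : KLdiv (πK1 s) (πK s) ≤ 2 * C :=
      le_trans (le_ciSup (f := fun s => KLdiv (πK1 s) (πK s)) (Set.Finite.bddAbove (Set.finite_range _)) s) hKL
    have hpin := pinsker (hπK1.1 s) (hπK1.2 s) (hπKpos s) (hπK.2 s)
    have heq : ∑ a, |πt s a - πK s a| = ζ * ∑ a, |πK1 s a - πK s a| := by
      rw [Finset.mul_sum]
      apply Finset.sum_congr rfl
      intro a _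
      rw [hmix s a]
      rw [show ζ * πK1 s a + (1 - ζ) * πK s a - πK s a = ζ * (πK1 s a - πK s a) by ring]
      rw [abs_mul, abs_of_nonneg hζ0]
    rw [heq]
    apply le_of_pow_le_pow_left₀ two_ne_zero hℓ0
    rw [hℓsq, mul_pow]
    calc ζ ^ 2 * (∑ a, |πK1 s a - πK s a|) ^ 2 ≤ ζ ^ 2 * (2 * KLdiv (πK1 s) (πK s)) :=
          mul_le_mul_of_nonneg_left hpin (sq_nonneg ζ)
      _ ≤ ζ ^ 2 * (2 * (2 * C)) := by
          apply mul_le_mul_of_nonneg_left _ (sq_nonneg ζ)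
          linarith
      _ = 4 * ζ ^ 2 * C := by ring
  -- advantage bound
  have hQb := Q_bound M πK Q hπK hQ
  have hA : ∀ s, |polAdv πt πK Q s| ≤ ℓ / (1 - M.γ) := by
    intro s
    calc |polAdv πt πK Q s| ≤ ∑ a, |(πt s a - πK s a) * Q s a| :=
          Finset.abs_sum_le_sum_abs _ _
      _ ≤ ∑ a, |πt s a - πK s a| * (1 / (1 - M.γ)) := by
          apply Finset.sum_le_sum
          intro a _
          rw [abs_mul]
          exact mul_le_mul_of_nonneg_left (hQb s a) (abs_nonneg _)
      _ = (∑ a, |πt s a - πK s a|) * (1 / (1 - M.γ)) := by rw [Finset.sum_mul]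
      _ ≤ ℓ * (1 / (1 - M.γ)) := by
          apply mul_le_mul_of_nonneg_right (hLt s) (by positivity)
      _ = ℓ / (1 - M.γ) := by ring
  -- kernel row sums
  have hrow : ∀ (π : S → A → ℝ), IsPolicy π → ∀ s, ∑ s', ∑ a, π s a * M.P s a s' = 1 := by
    intro π hπ s
    rw [Finset.sum_comm]
    calc ∑ a, ∑ s', π s a * M.P s a s' = ∑ a, π s a * ∑ s', M.P s a s' := by
          apply Finset.sum_congr rfl; intro a _; rw [Finset.mul_sum]
      _ = 1 := by simp only [M.P_sum_one, mul_one]; exact hπ.2 s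
  -- ∑ |d| ≤ 1
  have hd1 : ∑ s, |d s| ≤ 1 := by
    have step : ∀ s', |d s'| ≤ (1 - M.γ) * (if s' = M.s0 then (1:ℝ) else 0)
        + M.γ * ∑ s, |d s| * ∑ a, πK s a * M.P s a s' := by
      intro s'
      rw [hd s']
      refine (abs_add_le _ _).trans ?_
      apply add_le_add
      · rw [abs_mul, abs_of_pos hγ1]
        apply mul_le_mul_of_nonneg_left _ hγ1.le
        split <;> simp
      · rw [abs_mul, abs_of_pos hγ0]
        apply mul_le_mul_of_nonneg_left _ hγ0.le
        refine (Finset.abs_sum_le_sum_abs _ _).trans ?_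
        apply Finset.sum_le_sum
        intro s _
        rw [abs_mul]
        apply mul_le_mul_of_nonneg_left _ (abs_nonneg _)
        rw [abs_of_nonneg]
        apply Finset.sum_nonneg
        intro a _
        exact mul_nonneg (hπK.1 s a) (M.P_nonneg s a s')
    have hsum := Finset.sum_le_sum (fun s' (_ : s' ∈ Finset.univ) => step s')
    rw [Finset.sum_add_distrib, ← Finset.mul_sum, ← Finset.mul_sum] at hsum
    have h1 : ∑ s', (if s' = M.s0 then (1:ℝ) else 0) = 1 := by simp
    have h2 : ∑ s', ∑ s, |d s| * ∑ a, πK s a * M.P s a s'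
        = ∑ s, |d s| := by
      rw [Finset.sum_comm]
      apply Finset.sum_congr rfl
      intro s _
      rw [← Finset.mul_sum]
      rw [show ∑ s', ∑ a, πK s a * M.P s a s' = 1 from ?_, mul_one]
      exact hrow πK hπK s
    rw [h1, h2] at hsum
    nlinarith [hsum]
  -- difference identity
  have hident : ∀ s', dt s' - d s' = M.γ * ∑ s, ((dt s - d s) * (∑ a, πt s a * M.P s a s')
      + d s * ((∑ a, πt s a * M.P s a s') - (∑ a, πK s a * M.P s a s'))) := by
    intro s'
    calc dt s' - d s' = M.γ * (∑ s, dt s * ∑ a, πt s a * M.P s a s')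
          - M.γ * (∑ s, d s * ∑ a, πK s a * M.P s a s') := by rw [hdt s', hd s']; ring
      _ = _ := by
          rw [← mul_sub, ← Finset.sum_sub_distrib]
          congr 1
          apply Finset.sum_congr rfl
          intro s _
          ring
  -- bound on ΔK row sum
  have hΔ : ∀ s, ∑ s', |(∑ a, πt s a * M.P s a s') - (∑ a, πK s a * M.P s a s')| ≤ ℓ := by
    intro s
    calc ∑ s', |(∑ a, πt s a * M.P s a s') - (∑ a, πK s a * M.P s a s')|
        = ∑ s', |∑ a, (πt s a - πK s a) * M.P s a s'| := by
          apply Finset.sum_congr rfl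
          intro s' _
          rw [← Finset.sum_sub_distrib]
          congr 1
          apply Finset.sum_congr rfl
          intro a _
          ring
      _ ≤ ∑ s', ∑ a, |(πt s a - πK s a) * M.P s a s'| := by
          apply Finset.sum_le_sum
          intro s' _
          exact Finset.abs_sum_le_sum_abs _ _
      _ = ∑ a, |πt s a - πK s a| * ∑ s', M.P s a s' := by
          rw [Finset.sum_comm]
          apply Finset.sum_congr rfl
          intro a _
          rw [Finset.mul_sum]
          apply Finset.sum_congr rfl
          intro s' _
          rw [abs_mul, abs_of_nonneg (M.P_nonneg s a s')]
      _ = ∑ a, |πt s a - πK s a| := by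
          simp only [M.P_sum_one, mul_one]
      _ ≤ ℓ := hLt s
  -- E bound
  set E := ∑ s, |dt s - d s| with hE
  have hEbound : E ≤ M.γ * ℓ / (1 - M.γ) := by
    have habs : ∀ s', |dt s' - d s'| ≤ M.γ * ((∑ s, |dt s - d s| * (∑ a, πt s a * M.P s a s'))
        + ∑ s, |d s| * |(∑ a, πt s a * M.P s a s') - (∑ a, πK s a * M.P s a s')|) := by
      intro s'
      rw [hident s', abs_mul, abs_of_pos hγ0]
      apply mul_le_mul_of_nonneg_left _ hγ0.le
      refine (Finset.abs_sum_le_sum_abs _ _).trans ?_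
      rw [← Finset.sum_add_distrib]
      apply Finset.sum_le_sum
      intro s _
      refine (abs_add_le _ _).trans ?_
      apply add_le_add
      · rw [abs_mul]
        apply mul_le_mul_of_nonneg_left _ (abs_nonneg _)
        rw [abs_of_nonneg (Finset.sum_nonneg fun a _ => mul_nonneg (hπt.1 s a) (M.P_nonneg s a s'))]
      · rw [abs_mul]
    have hsum := Finset.sum_le_sum (fun s' (_ : s' ∈ Finset.univ) => habs s')
    rw [← Finset.mul_sum, Finset.sum_add_distrib] at hsum
    have h2 : ∑ s', ∑ s, |dt s - d s| * (∑ a, πt s a * M.P s a s') = E := by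
      rw [Finset.sum_comm, hE]
      apply Finset.sum_congr rfl
      intro s _
      rw [← Finset.mul_sum, hrow πt hπt s, mul_one]
    have h3 : ∑ s', ∑ s, |d s| * |(∑ a, πt s a * M.P s a s') - (∑ a, πK s a * M.P s a s')| ≤ ℓ := by
      rw [Finset.sum_comm]
      calc ∑ s, ∑ s', |d s| * |(∑ a, πt s a * M.P s a s') - (∑ a, πK s a * M.P s a s')|
          = ∑ s, |d s| * ∑ s', |(∑ a, πt s a * M.P s a s') - (∑ a, πK s a * M.P s a s')| := by
            apply Finset.sum_congr rfl
            intro s _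
            rw [Finset.mul_sum]
        _ ≤ ∑ s, |d s| * ℓ := by
            apply Finset.sum_le_sum
            intro s _
            exact mul_le_mul_of_nonneg_left (hΔ s) (abs_nonneg _)
        _ = (∑ s, |d s|) * ℓ := by rw [Finset.sum_mul]
        _ ≤ 1 * ℓ := mul_le_mul_of_nonneg_right hd1 hℓ0
        _ = ℓ := one_mul ℓ
    rw [h2] at hsum
    have hkey : E ≤ M.γ * (E + ℓ) := by
      refine hsum.trans ?_
      apply mul_le_mul_of_nonneg_left _ hγ0.le
      linarith
    rw [le_div_iff₀ hγ1]
    nlinarith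
  -- final assembly
  have hmain : |∑ s, (dt s - d s) * polAdv πt πK Q s| ≤ E * (ℓ / (1 - M.γ)) := by
    calc |∑ s, (dt s - d s) * polAdv πt πK Q s| ≤ ∑ s, |(dt s - d s) * polAdv πt πK Q s| :=
          Finset.abs_sum_le_sum_abs _ _
      _ ≤ ∑ s, |dt s - d s| * (ℓ / (1 - M.γ)) := by
          apply Finset.sum_le_sum
          intro s _
          rw [abs_mul]
          exact mul_le_mul_of_nonneg_left (hA s) (abs_nonneg _)
      _ = E * (ℓ / (1 - M.γ)) := by rw [← Finset.sum_mul]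
  have hE0 : 0 ≤ E := Finset.sum_nonneg fun s _ => abs_nonneg _
  have hfinal : E * (ℓ / (1 - M.γ)) ≤ 4 * M.γ * ζ ^ 2 * C / (1 - M.γ) ^ 2 := by
    calc E * (ℓ / (1 - M.γ)) ≤ (M.γ * ℓ / (1 - M.γ)) * (ℓ / (1 - M.γ)) :=
          mul_le_mul_of_nonneg_right hEbound (by positivity)
      _ = M.γ * ℓ ^ 2 / (1 - M.γ) ^ 2 := by field_simp
      _ = 4 * M.γ * ζ ^ 2 * C / (1 - M.γ) ^ 2 := by rw [hℓsq]; ring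
  refine hmain.trans (hfinal.trans ?_)
  apply div_le_div_of_nonneg_left (by positivity) (by positivity)
  nlinarith [sq_nonneg (1 - M.γ)]
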